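/- arXiv:2109.10071 — 2 statements merged into one kernel-verified Lean document; each statement's English description precedes it below -/
import Mathlib

section
/- Let $L > 0$, let $K(x) = \frac{1}{2}\int_0^{\pi/2} \tan\psi\, e^{-|x|/\cos\psi}\, d\psi$, and let $\Psi \in C([0,L])$. Then there exists a unique $\theta \in C([0,L])$ satisfying the Fredholm integral equation of the second kind $\theta(x) = \int_0^L \theta(\xi) K(x - \xi)\, d\xi + \Psi(x)$ for all $x \in [0,L]$. -/
open Real MeasureTheory Set intervalIntegral

noncomputable def slabg (a : ℝ) : ℝ := ∫ ψ in (0:ℝ)..(π/2), Real.tan ψ * Real.exp (-a / Real.cos ψ)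

lemma meas_tan : Measurable Real.tan := by
  have : Real.tan = fun x => Real.sin x / Real.cos x := funext fun x => Real.tan_eq_sin_div_cos x
  rw [this]; exact Real.measurable_sin.div Real.measurable_cos

lemma slab_meas2 : Measurable (fun p : ℝ × ℝ => Real.tan p.2 * Real.exp (-p.1 / Real.cos p.2)) :=
  (meas_tan.comp measurable_snd).mul
    (((measurable_fst.neg).div (Real.measurable_cos.comp measurable_snd)).exp)

lemma slab_meas1 (a : ℝ) : Measurable (fun ψ : ℝ => Real.tan ψ * Real.exp (-a / Real.cos ψ)) :=
  meas_tan.mul ((measurable_const.div Real.measurable_cos).exp)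

lemma integrand_nonneg (a : ℝ) {ψ : ℝ} (h : ψ ∈ Icc 0 (π/2)) :
    0 ≤ Real.tan ψ * Real.exp (-a / Real.cos ψ) :=
  mul_nonneg (Real.tan_nonneg_of_nonneg_of_le_pi_div_two h.1 h.2) (Real.exp_nonneg _)

lemma aux_bound {a s : ℝ} (ha : 0 < a) (hs : 0 ≤ s) : s * Real.exp (-(a*s)) ≤ 1/a := by
  have h1 : a * s * Real.exp (-(a*s)) ≤ 1 := by
    have h2 := Real.add_one_le_exp (a*s)
    have he : Real.exp (a*s) * Real.exp (-(a*s)) = 1 := by rw [← Real.exp_add]; simp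
    nlinarith [Real.exp_pos (-(a*s))]
  calc s * Real.exp (-(a*s)) = (1/a) * (a*s*Real.exp (-(a*s))) := by field_simp
  _ ≤ (1/a) * 1 := by apply mul_le_mul_of_nonneg_left h1; positivity
  _ = 1/a := mul_one _

lemma integrand_le {a : ℝ} (ha : 0 < a) {ψ : ℝ} (h : ψ ∈ Icc 0 (π/2)) :
    Real.tan ψ * Real.exp (-a / Real.cos ψ) ≤ 1/a := by
  rcases eq_or_lt_of_le h.2 with he | hlt
  · rw [he, Real.tan_pi_div_two, zero_mul]; positivity
  · have hc : 0 < Real.cos ψ := Real.cos_pos_of_mem_Ioo ⟨by linarith [h.1, Real.pi_pos], hlt⟩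
    have h1 : Real.tan ψ ≤ 1 / Real.cos ψ := by
      rw [Real.tan_eq_sin_div_cos]
      gcongr
      exact Real.sin_le_one ψ
    have h2 : -a / Real.cos ψ = -(a * (1/Real.cos ψ)) := by field_simp
    calc Real.tan ψ * Real.exp (-a / Real.cos ψ)
        ≤ (1/Real.cos ψ) * Real.exp (-(a * (1/Real.cos ψ))) := by
          rw [h2]; exact mul_le_mul_of_nonneg_right h1 (Real.exp_nonneg _)
    _ ≤ 1/a := aux_bound ha (by positivity)

lemma integrand_intble {a : ℝ} (ha : 0 < a) :
    IntervalIntegrable (fun ψ : ℝ => Real.tan ψ * Real.exp (-a / Real.cos ψ)) volume 0 (π/2) := by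
  rw [intervalIntegrable_iff_integrableOn_Ioc_of_le (by positivity)]
  apply Measure.integrableOn_of_bounded (M := 1/a) (by simp) (slab_meas1 a).aestronglyMeasurable
  filter_upwards [ae_restrict_mem measurableSet_Ioc] with ψ hψ
  rw [Real.norm_eq_abs, abs_of_nonneg (integrand_nonneg a ⟨hψ.1.le, hψ.2⟩)]
  exact integrand_le ha ⟨hψ.1.le, hψ.2⟩

lemma slabg_nonneg (a : ℝ) : 0 ≤ slabg a :=
  intervalIntegral.integral_nonneg (by positivity) (fun ψ h => integrand_nonneg a h)

-- inner integral over a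
lemma inner_a (ψ : ℝ) (c : ℝ) :
    ∫ a in (0:ℝ)..c, Real.tan ψ * Real.exp (-a / Real.cos ψ)
      = Real.sin ψ * (1 - Real.exp (-c / Real.cos ψ)) := by
  by_cases h : Real.cos ψ = 0
  · have ht : Real.tan ψ = 0 := by rw [Real.tan_eq_sin_div_cos, h, div_zero]
    simp [h, ht]
  · set k := Real.cos ψ with hk
    have hD : ∀ a ∈ uIcc (0:ℝ) c, HasDerivAt (fun a : ℝ => -k * Real.exp (-a/k))
        (Real.exp (-a/k)) a := by
      intro a _
      have h1 : HasDerivAt (fun a : ℝ => -a/k) (-1/k) a := by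
        simpa using ((hasDerivAt_id a).neg.div_const k)
      have h2 := (Real.hasDerivAt_exp (-a/k)).comp a h1
      have h3 := h2.const_mul (-k)
      refine h3.congr_deriv ?_
      field_simp
    have hi : IntervalIntegrable (fun a : ℝ => Real.exp (-a/k)) volume 0 c := by
      apply Continuous.intervalIntegrable
      exact Real.continuous_exp.comp (continuous_id.neg.div_const k)
    have := intervalIntegral.integral_eq_sub_of_hasDerivAt hD hi
    have hmul : ∫ a in (0:ℝ)..c, Real.tan ψ * Real.exp (-a / k)
        = Real.tan ψ * ∫ a in (0:ℝ)..c, Real.exp (-a / k) := by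
      rw [← intervalIntegral.integral_const_mul]
    rw [hmul, this]
    rw [Real.tan_eq_sin_div_cos, ← hk]
    field_simp
    rw [zero_div, neg_zero, Real.exp_zero]; ring

lemma w_meas (c : ℝ) : Measurable (fun ψ : ℝ => Real.sin ψ * (1 - Real.exp (-c / Real.cos ψ))) :=
  Real.measurable_sin.mul (measurable_const.sub ((measurable_const.div Real.measurable_cos).exp))

lemma w_mem {c ψ : ℝ} (hc : 0 ≤ c) (h : ψ ∈ Icc 0 (π/2)) :
    Real.sin ψ * (1 - Real.exp (-c / Real.cos ψ)) ∈ Icc (0:ℝ) 1 := by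
  have hs : Real.sin ψ ∈ Icc (0:ℝ) 1 :=
    ⟨Real.sin_nonneg_of_nonneg_of_le_pi h.1 (by linarith [Real.pi_pos, h.2]), Real.sin_le_one ψ⟩
  have hcos : 0 ≤ Real.cos ψ := Real.cos_nonneg_of_mem_Icc ⟨by linarith [h.1, Real.pi_pos], h.2⟩
  have hE : Real.exp (-c / Real.cos ψ) ≤ 1 := by
    have : -c / Real.cos ψ ≤ 0 := by
      rw [neg_div]
      exact neg_nonpos.mpr (div_nonneg hc hcos)
    calc Real.exp (-c / Real.cos ψ) ≤ Real.exp 0 := Real.exp_le_exp.mpr this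
    _ = 1 := Real.exp_zero
  have hE0 : 0 < Real.exp (-c / Real.cos ψ) := Real.exp_pos _
  constructor
  · exact mul_nonneg hs.1 (by linarith)
  · nlinarith [hs.1, hs.2]

lemma cont_in_a (ψ : ℝ) : Continuous (fun a : ℝ => Real.tan ψ * Real.exp (-a / Real.cos ψ)) := by
  by_cases h : Real.cos ψ = 0
  · have ht : Real.tan ψ = 0 := by rw [Real.tan_eq_sin_div_cos, h, div_zero]
    simp only [ht, zero_mul]; exact continuous_const
  · exact continuous_const.mul (Real.continuous_exp.comp (continuous_id.neg.div_const _))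

lemma slab_fubini {c : ℝ} (hc : 0 ≤ c) :
    IntegrableOn slabg (Ioc 0 c) ∧
    ∫ a in (0:ℝ)..c, slabg a
      = ∫ ψ in (0:ℝ)..(π/2), Real.sin ψ * (1 - Real.exp (-c / Real.cos ψ)) := by
  set μ := volume.restrict (Ioc (0:ℝ) c)
  set ν := volume.restrict (Ioc (0:ℝ) (π/2))
  set f : ℝ × ℝ → ℝ := fun p => Real.tan p.2 * Real.exp (-p.1 / Real.cos p.2) with hf
  have hπ : (0:ℝ) ≤ π/2 := by positivity
  have hmeas : AEStronglyMeasurable f (μ.prod ν) := slab_meas2.aestronglyMeasurable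
  have hslice : ∀ ψ ∈ Ioc (0:ℝ) (π/2),
      (∫ a, ‖f (a, ψ)‖ ∂μ) = Real.sin ψ * (1 - Real.exp (-c / Real.cos ψ)) := by
    intro ψ hψ
    have hψ' : ψ ∈ Icc (0:ℝ) (π/2) := ⟨hψ.1.le, hψ.2⟩
    have : ∀ a, ‖f (a, ψ)‖ = f (a, ψ) := fun a =>
      Real.norm_of_nonneg (integrand_nonneg a hψ')
    simp_rw [this]
    have : (∫ a, f (a, ψ) ∂μ) = ∫ a in (0:ℝ)..c, Real.tan ψ * Real.exp (-a / Real.cos ψ) := by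
      rw [intervalIntegral.integral_of_le hc]
    rw [this, inner_a]
  have hint : Integrable f (μ.prod ν) := by
    rw [integrable_prod_iff' hmeas]
    constructor
    · filter_upwards with ψ
      exact (cont_in_a ψ).integrableOn_Ioc
    · apply Integrable.congr (g := fun ψ => ∫ a, ‖f (a, ψ)‖ ∂μ)
        (f := fun ψ : ℝ => Real.sin ψ * (1 - Real.exp (-c / Real.cos ψ)))
      · apply Measure.integrableOn_of_bounded (M := 1) (by simp) (w_meas c).aestronglyMeasurable
        filter_upwards [ae_restrict_mem measurableSet_Ioc] with ψ hψ
        have := w_mem hc ⟨hψ.1.le, hψ.2⟩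
        rw [Real.norm_eq_abs, abs_of_nonneg this.1]; exact this.2
      · filter_upwards [ae_restrict_mem measurableSet_Ioc] with ψ hψ
        exact (hslice ψ hψ).symm
  have hswap := MeasureTheory.integral_integral_swap (μ := μ) (ν := ν)
      (f := fun a ψ => Real.tan ψ * Real.exp (-a / Real.cos ψ)) hint
  have hg_int : IntegrableOn slabg (Ioc 0 c) := by
    apply (hint.integral_prod_left).congr
    filter_upwards with a
    show (∫ ψ, f (a, ψ) ∂ν) = slabg a
    rw [slabg, intervalIntegral.integral_of_le hπ]
  refine ⟨hg_int, ?_⟩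
  have h1 : ∫ a in (0:ℝ)..c, slabg a = ∫ a, (∫ ψ, f (a, ψ) ∂ν) ∂μ := by
    rw [intervalIntegral.integral_of_le hc]
    apply setIntegral_congr_fun measurableSet_Ioc
    intro a _
    rw [slabg, intervalIntegral.integral_of_le hπ]
  have h2 : ∫ ψ, (∫ a, f (a, ψ) ∂μ) ∂ν
      = ∫ ψ in (0:ℝ)..(π/2), Real.sin ψ * (1 - Real.exp (-c / Real.cos ψ)) := by
    rw [intervalIntegral.integral_of_le hπ]
    apply setIntegral_congr_fun measurableSet_Ioc
    intro ψ _
    show (∫ a, f (a, ψ) ∂μ) = Real.sin ψ * (1 - Real.exp (-c / Real.cos ψ))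
    have : (∫ a, f (a, ψ) ∂μ) = ∫ a in (0:ℝ)..c, Real.tan ψ * Real.exp (-a / Real.cos ψ) := by
      rw [intervalIntegral.integral_of_le hc]
    rw [this, inner_a]
  rw [h1, hswap, h2]

lemma slabg_intble {c : ℝ} (hc : 0 ≤ c) : IntervalIntegrable slabg volume 0 c := by
  rw [intervalIntegrable_iff_integrableOn_Ioc_of_le hc]; exact (slab_fubini hc).1

lemma G_mono {c d : ℝ} (hc : 0 ≤ c) (hcd : c ≤ d) :
    ∫ a in (0:ℝ)..c, slabg a ≤ ∫ a in (0:ℝ)..d, slabg a := by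
  have hd : 0 ≤ d := hc.trans hcd
  have h1 : IntervalIntegrable slabg volume 0 c :=
    (slabg_intble hd).mono_set (uIcc_subset_uIcc (by simp [uIcc_of_le hd]; exact hd)
      (by simp [uIcc_of_le hd]; exact ⟨hc, hcd⟩))
  have h2 : IntervalIntegrable slabg volume c d :=
    (slabg_intble hd).mono_set (uIcc_subset_uIcc (by simp [uIcc_of_le hd]; exact ⟨hc, hcd⟩)
      (by simp [uIcc_of_le hd]; exact hd))
  rw [← intervalIntegral.integral_add_adjacent_intervals h1 h2]
  have : 0 ≤ ∫ a in c..d, slabg a :=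
    intervalIntegral.integral_nonneg hcd (fun a _ => slabg_nonneg a)
  linarith

lemma w_intble {c : ℝ} (hc : 0 ≤ c) {u v : ℝ} (h : uIcc u v ⊆ Icc 0 (π/2)) :
    IntervalIntegrable (fun ψ => Real.sin ψ * (1 - Real.exp (-c / Real.cos ψ))) volume u v := by
  rw [intervalIntegrable_iff]
  apply Measure.integrableOn_of_bounded (M := 1)
  · rw [Set.uIoc]; exact measure_Ioc_lt_top.ne
  · exact (w_meas c).aestronglyMeasurable
  · filter_upwards [ae_restrict_mem measurableSet_uIoc] with ψ hψ
    have hψ' : ψ ∈ Icc 0 (π/2) := h (uIoc_subset_uIcc hψ)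
    have := w_mem hc hψ'
    rw [Real.norm_eq_abs, abs_of_nonneg this.1]; exact this.2

lemma G_le {c : ℝ} (hc : 0 ≤ c) :
    ∫ a in (0:ℝ)..c, slabg a ≤ 1 - Real.exp (-2*c)/2 := by
  rw [(slab_fubini hc).2]
  have hπ : (0:ℝ) < π := Real.pi_pos
  have h3 : (0:ℝ) ≤ π/3 := by positivity
  have h32 : π/3 ≤ π/2 := by linarith
  have hs1 : uIcc (0:ℝ) (π/3) ⊆ Icc 0 (π/2) := by
    rw [uIcc_of_le h3]; exact Icc_subset_Icc le_rfl h32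
  have hs2 : uIcc (π/3) (π/2) ⊆ Icc 0 (π/2) := by
    rw [uIcc_of_le h32]; exact Icc_subset_Icc h3 le_rfl
  rw [← intervalIntegral.integral_add_adjacent_intervals (w_intble hc hs1) (w_intble hc hs2)]
  have b1 : ∫ ψ in (0:ℝ)..(π/3), Real.sin ψ * (1 - Real.exp (-c / Real.cos ψ))
      ≤ ∫ ψ in (0:ℝ)..(π/3), Real.sin ψ * (1 - Real.exp (-2*c)) := by
    apply intervalIntegral.integral_mono_on h3 (w_intble hc hs1)
    · exact (Real.continuous_sin.mul continuous_const).intervalIntegrable _ _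
    · intro ψ hψ
      have hψ' : ψ ∈ Icc 0 (π/2) := ⟨hψ.1, hψ.2.trans h32⟩
      have hsin : 0 ≤ Real.sin ψ := Real.sin_nonneg_of_nonneg_of_le_pi hψ'.1 (by linarith [hψ'.2])
      have hcos : 1/2 ≤ Real.cos ψ := by
        have := Real.cos_le_cos_of_nonneg_of_le_pi hψ.1 (by linarith) hψ.2
        rwa [Real.cos_pi_div_three] at this
      have hE : Real.exp (-(2*c)) ≤ Real.exp (-c / Real.cos ψ) := by
        apply Real.exp_le_exp.mpr
        rw [neg_div, neg_le_neg_iff]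
        rw [div_le_iff₀ (by linarith)]
        nlinarith
      have : 1 - Real.exp (-c / Real.cos ψ) ≤ 1 - Real.exp (-2*c) := by
        rw [show (-2)*c = -(2*c) by ring]; linarith
      exact mul_le_mul_of_nonneg_left this hsin
  have b2 : ∫ ψ in (π/3)..(π/2), Real.sin ψ * (1 - Real.exp (-c / Real.cos ψ))
      ≤ ∫ ψ in (π/3)..(π/2), Real.sin ψ := by
    apply intervalIntegral.integral_mono_on h32 (w_intble hc hs2)
    · exact Real.continuous_sin.intervalIntegrable _ _
    · intro ψ hψ
      have hψ' : ψ ∈ Icc 0 (π/2) := ⟨h3.trans hψ.1, hψ.2⟩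
      have hsin : 0 ≤ Real.sin ψ := Real.sin_nonneg_of_nonneg_of_le_pi hψ'.1 (by linarith [hψ'.2])
      have hE : 0 < Real.exp (-c / Real.cos ψ) := Real.exp_pos _
      nlinarith
  have e1 : ∫ ψ in (0:ℝ)..(π/3), Real.sin ψ * (1 - Real.exp (-2*c))
      = (1 - Real.exp (-2*c)) * (1/2) := by
    rw [show (fun ψ => Real.sin ψ * (1 - Real.exp (-2*c))) = fun ψ => (1 - Real.exp (-2*c)) * Real.sin ψ by funext; ring]
    rw [intervalIntegral.integral_const_mul, integral_sin, Real.cos_zero, Real.cos_pi_div_three]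
    norm_num
  have e2 : ∫ ψ in (π/3)..(π/2), Real.sin ψ = 1/2 := by
    rw [integral_sin, Real.cos_pi_div_two, Real.cos_pi_div_three]; norm_num
  have hE1 : Real.exp (-(2*c)) ≤ 1 := by
    rw [show (1:ℝ) = Real.exp 0 by rw [Real.exp_zero]]
    exact Real.exp_le_exp.mpr (by linarith)
  rw [e2] at b2
  rw [e1] at b1
  have : Real.exp (-2*c) = Real.exp (-(2*c)) := by ring_nf
  rw [this] at b1 ⊢
  linarith

noncomputable def Kf (x : ℝ) : ℝ := 1/2 * slabg |x|

lemma Kf_nonneg (x : ℝ) : 0 ≤ Kf x := by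
  have := slabg_nonneg |x|; rw [Kf]; linarith

lemma slabg_meas : Measurable slabg := by
  have h : slabg = fun a => ∫ ψ in Ioc (0:ℝ) (π/2),
      Real.tan ψ * Real.exp (-a / Real.cos ψ) := by
    funext a
    rw [slabg, intervalIntegral.integral_of_le (by positivity)]
  rw [h]
  exact (slab_meas2.stronglyMeasurable.integral_prod_right').measurable

lemma Kf_meas : Measurable Kf :=
  (measurable_const.mul (slabg_meas.comp measurable_abs))

lemma Kf_neg (x : ℝ) : Kf (-x) = Kf x := by rw [Kf, Kf, abs_neg]

lemma Kf_intble_pos {c : ℝ} (hc : 0 ≤ c) : IntervalIntegrable Kf volume 0 c := by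
  rw [intervalIntegrable_iff_integrableOn_Ioc_of_le hc]
  have h1 : IntegrableOn (fun u => 1/2 * slabg u) (Ioc 0 c) := (slab_fubini hc).1.const_mul _
  apply h1.congr_fun ?_ measurableSet_Ioc
  intro u hu
  rw [Kf, abs_of_nonneg hu.1.le]

lemma Kf_intble {c : ℝ} (hc : 0 ≤ c) : IntervalIntegrable Kf volume (-c) c := by
  have h1 := Kf_intble_pos hc
  have h2 : IntervalIntegrable Kf volume (-c) 0 := by
    have h3 := (IntervalIntegrable.iff_comp_neg).mp h1
    have h4 : (fun x => Kf (-x)) = Kf := funext Kf_neg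
    rw [h4] at h3
    simpa using h3.symm
  exact h2.trans h1

lemma Kf_eq_G {c : ℝ} (hc : 0 ≤ c) :
    ∫ u in (0:ℝ)..c, Kf u = 1/2 * ∫ a in (0:ℝ)..c, slabg a := by
  rw [← intervalIntegral.integral_const_mul]
  apply intervalIntegral.integral_congr
  intro u hu
  rw [uIcc_of_le hc] at hu
  rw [Kf, abs_of_nonneg hu.1]

lemma Kf_eq_G_neg {c : ℝ} (hc : 0 ≤ c) :
    ∫ u in (-c)..(0:ℝ), Kf u = 1/2 * ∫ a in (0:ℝ)..c, slabg a := by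
  have h := intervalIntegral.integral_comp_neg (a := (0:ℝ)) (b := c) (f := Kf)
  have h4 : (fun x : ℝ => Kf (-x)) = Kf := funext Kf_neg
  rw [h4] at h
  rw [neg_zero] at h
  rw [← Kf_eq_G hc]
  exact h.symm

lemma Kcomp_intble {L x : ℝ} (hL : 0 < L) (hx : x ∈ Icc 0 L) :
    IntervalIntegrable (fun ξ => Kf (x - ξ)) volume 0 L := by
  have hsub : uIcc x (x - L) ⊆ uIcc (-L) L := by
    apply uIcc_subset_uIcc
    · rw [uIcc_of_le (by linarith : -L ≤ L)]
      exact ⟨by linarith [hx.1, hx.2], by linarith [hx.1, hx.2]⟩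
    · rw [uIcc_of_le (by linarith : -L ≤ L)]
      exact ⟨by linarith [hx.1, hx.2], by linarith [hx.1, hx.2]⟩
  have h1 : IntervalIntegrable Kf volume x (x - L) := (Kf_intble (by linarith)).mono_set hsub
  have h2 := h1.comp_sub_left x
  simpa using h2

lemma Kcomp_bound {L x : ℝ} (hL : 0 < L) (hx : x ∈ Icc 0 L) :
    ∫ ξ in (0:ℝ)..L, Kf (x - ξ) ≤ 1 - Real.exp (-2*L)/2 := by
  have h1 : ∫ ξ in (0:ℝ)..L, Kf (x - ξ) = ∫ u in (x - L)..x, Kf u :=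
    intervalIntegral.integral_comp_sub_left Kf x |>.trans (by norm_num)
  have hxL : x - L ≤ 0 := by linarith [hx.2]
  have hx0 : 0 ≤ x := hx.1
  have hiL : IntervalIntegrable Kf volume (x-L) 0 := by
    apply (Kf_intble (le_of_lt hL)).mono_set
    apply uIcc_subset_uIcc <;> rw [uIcc_of_le (by linarith : -L ≤ L)]
    · exact ⟨by linarith, by linarith⟩
    · exact ⟨by linarith, by linarith⟩
  have hiR : IntervalIntegrable Kf volume 0 x := by
    apply (Kf_intble (le_of_lt hL)).mono_set
    apply uIcc_subset_uIcc <;> rw [uIcc_of_le (by linarith : -L ≤ L)]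
    · exact ⟨by linarith, by linarith⟩
    · exact ⟨by linarith, hx.2⟩
  rw [h1, ← intervalIntegral.integral_add_adjacent_intervals hiL hiR]
  have e1 : ∫ u in (x-L)..(0:ℝ), Kf u = 1/2 * ∫ a in (0:ℝ)..(L-x), slabg a := by
    have := Kf_eq_G_neg (c := L - x) (by linarith)
    rw [show -(L-x) = x - L by ring] at this
    exact this
  have e2 : ∫ u in (0:ℝ)..x, Kf u = 1/2 * ∫ a in (0:ℝ)..x, slabg a := Kf_eq_G hx0
  rw [e1, e2]
  have m1 : ∫ a in (0:ℝ)..(L-x), slabg a ≤ ∫ a in (0:ℝ)..L, slabg a := G_mono (by linarith) (by linarith)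
  have m2 : ∫ a in (0:ℝ)..x, slabg a ≤ ∫ a in (0:ℝ)..L, slabg a := G_mono hx0 hx.2
  have m3 := G_le (le_of_lt hL)
  linarith

lemma indicator_contAt {L : ℝ} {h : ℝ → ℝ} (hh : Continuous h) {ξ : ℝ} (h0 : ξ ≠ 0) (hLξ : ξ ≠ L) :
    ContinuousAt ((Ioc (0:ℝ) L).indicator h) ξ := by
  set H := (Ioc (0:ℝ) L).indicator h with hH
  rcases lt_trichotomy ξ 0 with hlt | heq | hgt
  · have hev : H =ᶠ[nhds ξ] (fun _ => 0) := by
      filter_upwards [Iio_mem_nhds hlt] with y hy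
      exact Set.indicator_of_notMem (fun hmem => absurd hmem.1 (not_lt.mpr hy.le)) h
    exact continuousAt_const.congr hev.symm
  · exact absurd heq h0
  · rcases lt_trichotomy ξ L with hlt2 | heq2 | hgt2
    · have hev : H =ᶠ[nhds ξ] h := by
        filter_upwards [Ioo_mem_nhds hgt hlt2] with y hy
        have hmem : y ∈ Ioc (0:ℝ) L := ⟨hy.1, hy.2.le⟩
        show H y = h y
        rw [hH, Set.indicator_of_mem hmem]
      exact hh.continuousAt.congr hev.symm
    · exact absurd heq2 hLξ
    · have hev : H =ᶠ[nhds ξ] (fun _ => 0) := by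
        filter_upwards [Ioi_mem_nhds hgt2] with y hy
        exact Set.indicator_of_notMem (fun hmem => absurd hmem.2 (not_le.mpr hy)) h
      exact continuousAt_const.congr hev.symm

lemma conv_repr {L : ℝ} (hL : 0 < L) {h : ℝ → ℝ} (x : ℝ) :
    ∫ ξ in (0:ℝ)..L, h ξ * Kf (x - ξ)
      = ∫ u, (Ioc (0:ℝ) L).indicator h (x - u) * Kf u := by
  set H := (Ioc (0:ℝ) L).indicator h with hH
  rw [intervalIntegral.integral_of_le hL.le]
  rw [← MeasureTheory.integral_indicator measurableSet_Ioc]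
  have e1 : (Ioc (0:ℝ) L).indicator (fun ξ => h ξ * Kf (x-ξ)) = fun ξ => H ξ * Kf (x - ξ) := by
    funext ξ
    by_cases hξ : ξ ∈ Ioc (0:ℝ) L
    · rw [Set.indicator_of_mem hξ, hH, Set.indicator_of_mem hξ]
    · rw [Set.indicator_of_notMem hξ, hH, Set.indicator_of_notMem hξ, zero_mul]
  rw [e1]
  have e2 := MeasureTheory.integral_sub_left_eq_self (μ := volume)
      (fun ξ => H ξ * Kf (x - ξ)) x
  simp only [sub_sub_cancel] at e2
  exact e2.symm

lemma conv_contAt {L : ℝ} (hL : 0 < L) {h : ℝ → ℝ} (hh : Continuous h) {M : ℝ}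
    (hM : ∀ ξ, |h ξ| ≤ M) {x₀ : ℝ} (hx₀ : x₀ ∈ Icc 0 L) :
    ContinuousAt (fun x => ∫ ξ in (0:ℝ)..L, h ξ * Kf (x - ξ)) x₀ := by
  set H := (Ioc (0:ℝ) L).indicator h with hH
  have hM0 : 0 ≤ M := (abs_nonneg (h 0)).trans (hM 0)
  have hHle : ∀ ξ, |H ξ| ≤ M := by
    intro ξ
    by_cases hξ : ξ ∈ Ioc (0:ℝ) L
    · rw [hH, Set.indicator_of_mem hξ]; exact hM ξ
    · rw [hH, Set.indicator_of_notMem hξ, abs_zero]; exact hM0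
  have hrepr : (fun x => ∫ ξ in (0:ℝ)..L, h ξ * Kf (x - ξ))
      = fun x => ∫ u, H (x - u) * Kf u := by
    funext x; exact conv_repr hL x
  rw [hrepr]
  have hHmeas : Measurable H := hh.measurable.indicator measurableSet_Ioc
  apply MeasureTheory.continuousAt_of_dominated
      (bound := (Icc (-(L+1)) (L+1)).indicator (fun u => M * Kf u))
  · filter_upwards with x
    exact ((hHmeas.comp (measurable_const.sub measurable_id)).mul Kf_meas).aestronglyMeasurable
  · filter_upwards [Metric.ball_mem_nhds x₀ one_pos] with x hx
    filter_upwards with u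
    have hxb : |x - x₀| < 1 := by
      rw [Metric.mem_ball, Real.dist_eq] at hx; exact hx
    by_cases hu : u ∈ Icc (-(L+1)) (L+1)
    · rw [Set.indicator_of_mem hu]
      rw [Real.norm_eq_abs, abs_mul, abs_of_nonneg (Kf_nonneg u)]
      exact mul_le_mul_of_nonneg_right (hHle _) (Kf_nonneg u)
    · rw [Set.indicator_of_notMem hu]
      have hz : H (x - u) = 0 := by
        rw [hH]
        apply Set.indicator_of_notMem
        intro hmem
        apply hu
        obtain ⟨hb1, hb2⟩ := abs_lt.mp hxb
        exact ⟨by linarith [hmem.2, hx₀.1], by linarith [hmem.1, hx₀.2]⟩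
      rw [hz, zero_mul, norm_zero]
  · apply MeasureTheory.IntegrableOn.integrable_indicator ?_ measurableSet_Icc
    have h1 : IntervalIntegrable Kf volume (-(L+1)) (L+1) := Kf_intble (by linarith)
    rw [intervalIntegrable_iff_integrableOn_Ioc_of_le (by linarith)] at h1
    rw [integrableOn_Icc_iff_integrableOn_Ioc]
    exact h1.const_mul M
  · have hae : ∀ᵐ u : ℝ, u ∉ ({x₀, x₀ - L} : Set ℝ) :=
      Set.Countable.ae_notMem ((Set.countable_singleton _).insert _) _
    filter_upwards [hae] with u hu
    have h0 : x₀ - u ≠ 0 := by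
      intro hc; apply hu; left; linarith
    have hLne : x₀ - u ≠ L := by
      intro hc; apply hu; right; simp; linarith
    have hc1 : ContinuousAt H (x₀ - u) := indicator_contAt hh h0 hLne
    have hc2 : ContinuousAt (fun x : ℝ => H (x - u)) x₀ := by
      have hsub : ContinuousAt (fun x : ℝ => x - u) x₀ :=
        (continuous_id.sub continuous_const).continuousAt
      exact ContinuousAt.comp (f := fun x : ℝ => x - u) (x := x₀) hc1 hsub
    exact hc2.mul continuousAt_const

theorem fredholm_second_kind_existence_uniqueness
    (L : ℝ) (hL : 0 < L)
    (K : ℝ → ℝ)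
    (hK : K = fun x => (1/2) * ∫ ψ in (0:ℝ)..(π/2), Real.tan ψ * Real.exp (-|x| / Real.cos ψ))
    (Ψ : ℝ → ℝ) (hΨ : ContinuousOn Ψ (Icc 0 L)) :
    ∃ θ : ℝ → ℝ,
      (ContinuousOn θ (Icc 0 L) ∧
        ∀ x ∈ Icc 0 L, θ x = (∫ ξ in (0:ℝ)..L, θ ξ * K (x - ξ)) + Ψ x) ∧
      ∀ θ' : ℝ → ℝ,
        (ContinuousOn θ' (Icc 0 L) ∧
          ∀ x ∈ Icc 0 L, θ' x = (∫ ξ in (0:ℝ)..L, θ' ξ * K (x - ξ)) + Ψ x) →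
        EqOn θ θ' (Icc 0 L) := by
  have hKf : K = Kf := by rw [hK]; funext x; rfl
  subst hKf
  have hL0 : (0:ℝ) ≤ L := hL.le
  set q : ℝ := 1 - Real.exp (-2*L)/2 with hq
  have hexp1 : Real.exp (-2*L) ≤ 1 := by
    rw [show (1:ℝ) = Real.exp 0 by rw [Real.exp_zero]]
    exact Real.exp_le_exp.mpr (by linarith)
  have hq0 : 0 ≤ q := by rw [hq]; linarith
  have hq1 : q < 1 := by
    rw [hq]; have := Real.exp_pos (-2*L); linarith
  set qn : NNReal := ⟨q, hq0⟩ with hqn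
  set ext : C(Icc (0:ℝ) L, ℝ) → ℝ → ℝ := fun f => IccExtend hL0 f with hext
  have hext_cont : ∀ f : C(Icc (0:ℝ) L, ℝ), Continuous (ext f) := fun f =>
    f.continuous.Icc_extend'
  have hext_bd : ∀ (f : C(Icc (0:ℝ) L, ℝ)) (ξ : ℝ), |ext f ξ| ≤ ‖f‖ := by
    intro f ξ
    rw [show ext f ξ = f (projIcc 0 L hL0 ξ) from rfl, ← Real.norm_eq_abs]
    exact f.norm_coe_le_norm _
  have hext_mem : ∀ (f : C(Icc (0:ℝ) L, ℝ)) (x : ℝ) (hx : x ∈ Icc (0:ℝ) L),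
      ext f x = f ⟨x, hx⟩ := fun f x hx => IccExtend_of_mem hL0 f hx
  -- interval integrability of products
  have hprod_int : ∀ (f : C(Icc (0:ℝ) L, ℝ)) (t : ℝ), t ∈ Icc (0:ℝ) L →
      IntervalIntegrable (fun ξ => ext f ξ * Kf (t - ξ)) volume 0 L := by
    intro f t ht
    exact (Kcomp_intble hL ht).continuousOn_mul (hext_cont f).continuousOn
  -- the operator
  have hΨc : Continuous fun t : Icc (0:ℝ) L => Ψ ↑t := hΨ.restrict
  have hJcont : ∀ f : C(Icc (0:ℝ) L, ℝ),
      Continuous fun t : Icc (0:ℝ) L => ∫ ξ in (0:ℝ)..L, ext f ξ * Kf (↑t - ξ) := by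
    intro f
    have h1 : ContinuousOn (fun x => ∫ ξ in (0:ℝ)..L, ext f ξ * Kf (x - ξ)) (Icc 0 L) :=
      fun x hx => (conv_contAt hL (hext_cont f) (hext_bd f) hx).continuousWithinAt
    exact h1.restrict
  set T : C(Icc (0:ℝ) L, ℝ) → C(Icc (0:ℝ) L, ℝ) := fun f =>
    ⟨fun t => (∫ ξ in (0:ℝ)..L, ext f ξ * Kf (↑t - ξ)) + Ψ ↑t, (hJcont f).add hΨc⟩ with hT
  -- contraction estimate
  have hTdist : ∀ f g : C(Icc (0:ℝ) L, ℝ), dist (T f) (T g) ≤ q * dist f g := by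
    intro f g
    rw [ContinuousMap.dist_le (mul_nonneg hq0 dist_nonneg)]
    intro t
    have ht : (t:ℝ) ∈ Icc (0:ℝ) L := t.2
    have hif := hprod_int f t ht
    have hig := hprod_int g t ht
    have hsub : T f t - T g t = ∫ ξ in (0:ℝ)..L, (ext f ξ - ext g ξ) * Kf (↑t - ξ) := by
      show ((∫ ξ in (0:ℝ)..L, ext f ξ * Kf (↑t - ξ)) + Ψ ↑t)
          - ((∫ ξ in (0:ℝ)..L, ext g ξ * Kf (↑t - ξ)) + Ψ ↑t) = _
      have h5 : ((∫ ξ in (0:ℝ)..L, ext f ξ * Kf (↑t - ξ)) + Ψ ↑t)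
          - ((∫ ξ in (0:ℝ)..L, ext g ξ * Kf (↑t - ξ)) + Ψ ↑t)
          = (∫ ξ in (0:ℝ)..L, ext f ξ * Kf (↑t - ξ))
            - ∫ ξ in (0:ℝ)..L, ext g ξ * Kf (↑t - ξ) := by ring
      rw [h5, ← intervalIntegral.integral_sub hif hig]
      apply intervalIntegral.integral_congr
      intro ξ _
      ring
    have hKc_int : IntervalIntegrable (fun ξ => dist f g * Kf (↑t - ξ)) volume 0 L :=
      (Kcomp_intble hL ht).const_mul _
    rw [Real.dist_eq, hsub]
    have step1 : |∫ ξ in (0:ℝ)..L, (ext f ξ - ext g ξ) * Kf (↑t - ξ)|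
        ≤ |∫ ξ in (0:ℝ)..L, dist f g * Kf (↑t - ξ)| := by
      rw [← Real.norm_eq_abs (∫ ξ in (0:ℝ)..L, (ext f ξ - ext g ξ) * Kf (↑t - ξ))]
      apply intervalIntegral.norm_integral_le_abs_of_norm_le ?_ hKc_int
      filter_upwards with ξ
      rw [Real.norm_eq_abs, abs_mul, abs_of_nonneg (Kf_nonneg _)]
      apply mul_le_mul_of_nonneg_right ?_ (Kf_nonneg _)
      have h1 : ext f ξ - ext g ξ = f (projIcc 0 L hL0 ξ) - g (projIcc 0 L hL0 ξ) := rfl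
      rw [h1, ← Real.dist_eq]
      exact ContinuousMap.dist_apply_le_dist _
    have step2 : |∫ ξ in (0:ℝ)..L, dist f g * Kf (↑t - ξ)| ≤ q * dist f g := by
      rw [intervalIntegral.integral_const_mul, abs_mul, abs_of_nonneg dist_nonneg,
        abs_of_nonneg (intervalIntegral.integral_nonneg hL0 (fun ξ _ => Kf_nonneg _))]
      rw [mul_comm q (dist f g)]
      exact mul_le_mul_of_nonneg_left (Kcomp_bound hL ht) dist_nonneg
    exact step1.trans step2
  have hlip : LipschitzWith qn T := LipschitzWith.of_dist_le_mul (fun f g => hTdist f g)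
  have hcw : ContractingWith qn T := ⟨by rwa [← NNReal.coe_lt_one], hlip⟩
  haveI : Nonempty (Icc (0:ℝ) L) := ⟨⟨0, le_rfl, hL0⟩⟩
  set Θ : C(Icc (0:ℝ) L, ℝ) := ContractingWith.fixedPoint T hcw with hΘdef
  have hΘfix : T Θ = Θ := hcw.fixedPoint_isFixedPt
  refine ⟨ext Θ, ⟨(hext_cont Θ).continuousOn, ?_⟩, ?_⟩
  · intro x hx
    have h1 : ext Θ x = Θ ⟨x, hx⟩ := hext_mem Θ x hx
    have h2 : Θ ⟨x, hx⟩ = T Θ ⟨x, hx⟩ := by rw [hΘfix]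
    have h3 : T Θ ⟨x, hx⟩ = (∫ ξ in (0:ℝ)..L, ext Θ ξ * Kf (x - ξ)) + Ψ x := rfl
    rw [h1, h2, h3]
  · rintro θ' ⟨hθ'c, hθ'eq⟩
    set Θ' : C(Icc (0:ℝ) L, ℝ) := ⟨fun t => θ' ↑t, hθ'c.restrict⟩ with hΘ'def
    have hfix' : Function.IsFixedPt T Θ' := by
      apply ContinuousMap.ext
      intro t
      have ht : (t:ℝ) ∈ Icc (0:ℝ) L := t.2
      have e1 : (∫ ξ in (0:ℝ)..L, ext Θ' ξ * Kf (↑t - ξ))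
          = ∫ ξ in (0:ℝ)..L, θ' ξ * Kf (↑t - ξ) := by
        apply intervalIntegral.integral_congr
        intro ξ hξ
        rw [uIcc_of_le hL0] at hξ
        have := hext_mem Θ' ξ hξ
        simp only [this]
        rfl
      show (∫ ξ in (0:ℝ)..L, ext Θ' ξ * Kf (↑t - ξ)) + Ψ ↑t = Θ' t
      rw [e1, ← hθ'eq ↑t ht]
      rfl
    have hΘeq : Θ' = Θ := hcw.fixedPoint_unique hfix'
    intro x hx
    have h1 : ext Θ x = Θ ⟨x, hx⟩ := hext_mem Θ x hx
    rw [h1, ← hΘeq]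
    rfl
end

section
/- For $L > 0$ and $K(x) = \frac{1}{2}\int_0^{\pi/2} \tan\psi\, e^{-|x|/\cos\psi}\, d\psi$, one has $\sup_{x \in [0,L]} \int_0^L K(x - \xi)\, d\xi < 1$. -/
open Real MeasureTheory Set

private lemma exp_mid (a b : ℝ) : 2 * Real.exp ((a + b) / 2) ≤ Real.exp a + Real.exp b := by
  have h1 : Real.exp ((a + b) / 2) = Real.exp (a/2) * Real.exp (b/2) := by
    rw [← Real.exp_add]; ring_nf
  have ha : Real.exp a = Real.exp (a/2) * Real.exp (a/2) := by
    rw [← Real.exp_add]; ring_nf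
  have hb : Real.exp b = Real.exp (b/2) * Real.exp (b/2) := by
    rw [← Real.exp_add]; ring_nf
  nlinarith [sq_nonneg (Real.exp (a/2) - Real.exp (b/2))]

private lemma integral_exp_affine (a b d c : ℝ) (hc : c ≠ 0) :
    ∫ ξ in a..b, Real.exp ((ξ - d) / c)
      = c * Real.exp ((b - d) / c) - c * Real.exp ((a - d) / c) := by
  have h : ∀ ξ : ℝ, HasDerivAt (fun t => c * Real.exp ((t - d) / c))
      (Real.exp ((ξ - d) / c)) ξ := by
    intro ξ
    have h1 : HasDerivAt (fun t : ℝ => (t - d) / c) (1 / c) ξ :=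
      ((hasDerivAt_id ξ).sub_const d).div_const c
    have h2 := h1.exp.const_mul c
    rw [show c * (Real.exp ((ξ - d) / c) * (1 / c)) = Real.exp ((ξ - d) / c) by field_simp] at h2
    exact h2
  rw [intervalIntegral.integral_eq_sub_of_hasDerivAt (fun ξ _ => h ξ)
    (Continuous.intervalIntegrable (by continuity) a b)]

private lemma inner_integral_eq (x L c : ℝ) (hc : 0 < c) (hx0 : 0 ≤ x) (hxL : x ≤ L) :
    ∫ ξ in (0:ℝ)..L, Real.exp (-|x - ξ| / c)
      = c * (2 - Real.exp (-x / c) - Real.exp (-(L - x) / c)) := by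
  have hcont : Continuous fun ξ : ℝ => Real.exp (-|x - ξ| / c) :=
    (((continuous_const.sub continuous_id).abs.neg).div_const c).rexp
  have h1 : IntervalIntegrable (fun ξ : ℝ => Real.exp (-|x - ξ| / c)) volume 0 x :=
    hcont.intervalIntegrable _ _
  have h2 : IntervalIntegrable (fun ξ : ℝ => Real.exp (-|x - ξ| / c)) volume x L :=
    hcont.intervalIntegrable _ _
  rw [← intervalIntegral.integral_add_adjacent_intervals h1 h2]
  have e1 : (∫ ξ in (0:ℝ)..x, Real.exp (-|x - ξ| / c))
      = ∫ ξ in (0:ℝ)..x, Real.exp ((ξ - x) / c) := by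
    apply intervalIntegral.integral_congr
    intro ξ hξ
    rw [uIcc_of_le hx0] at hξ
    have hs : |x - ξ| = x - ξ := abs_of_nonneg (by linarith [hξ.1, hξ.2])
    simp only [hs]; ring_nf
  have e2 : (∫ ξ in x..L, Real.exp (-|x - ξ| / c))
      = ∫ ξ in x..L, Real.exp ((ξ - x) / (-c)) := by
    apply intervalIntegral.integral_congr
    intro ξ hξ
    rw [uIcc_of_le hxL] at hξ
    have hs : |x - ξ| = ξ - x := by
      rw [abs_sub_comm]; exact abs_of_nonneg (by linarith [hξ.1])
    simp only [hs]; ring_nf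
  rw [e1, e2, integral_exp_affine 0 x x c hc.ne',
    integral_exp_affine x L x (-c) (by linarith)]
  rw [show (x - x) / c = 0 by ring, show (x - x) / (-c) = 0 by ring,
    show (0 - x) / c = -x / c by ring, show (L - x) / (-c) = -(L - x) / c by ring,
    Real.exp_zero]
  ring

private lemma inner_integral_le (x L c : ℝ) (hc : 0 < c) (hx0 : 0 ≤ x) (hxL : x ≤ L) :
    ∫ ξ in (0:ℝ)..L, Real.exp (-|x - ξ| / c)
      ≤ c * (2 - 2 * Real.exp (-L / (2 * c))) := by
  rw [inner_integral_eq x L c hc hx0 hxL]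
  have h := exp_mid (-x / c) (-(L - x) / c)
  have he : (-x / c + -(L - x) / c) / 2 = -L / (2 * c) := by
    field_simp; ring
  rw [he] at h
  nlinarith

theorem slab_kernel_mass_loss
    (L : ℝ) (hL : 0 < L)
    (K : ℝ → ℝ)
    (hK : K = fun x => (1/2) * ∫ ψ in (0:ℝ)..(π/2), Real.tan ψ * Real.exp (-|x| / Real.cos ψ)) :
    (⨆ x : Icc (0:ℝ) L, ∫ ξ in (0:ℝ)..L, K ((x : ℝ) - ξ)) < 1 := by
  have hπ2 : (0:ℝ) < π / 2 := by positivity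
  set g : ℝ → ℝ := fun ψ => Real.sin ψ * Real.exp (-L / (2 * Real.cos ψ)) with hg
  have hgmeas : Measurable g := by
    apply Real.measurable_sin.mul
    exact Real.measurable_exp.comp (measurable_const.div (measurable_const.mul Real.measurable_cos))
  have hgnonneg : ∀ ψ ∈ Icc (0:ℝ) (π/2), 0 ≤ g ψ := by
    intro ψ hψ
    exact mul_nonneg (Real.sin_nonneg_of_nonneg_of_le_pi hψ.1 (by linarith [pi_pos, hψ.2]))
      (Real.exp_pos _).le
  have hgbound : ∀ ψ ∈ Icc (0:ℝ) (π/2), ‖g ψ‖ ≤ 1 := by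
    intro ψ hψ
    have hcos : 0 ≤ Real.cos ψ := Real.cos_nonneg_of_mem_Icc ⟨by linarith [pi_pos, hψ.1], hψ.2⟩
    have h1 : Real.exp (-L / (2 * Real.cos ψ)) ≤ 1 := by
      apply Real.exp_le_one_iff.mpr
      rw [neg_div]
      exact neg_nonpos.mpr (div_nonneg hL.le (by linarith))
    rw [Real.norm_eq_abs, hg, abs_mul, abs_of_pos (Real.exp_pos _)]
    exact mul_le_one₀ (Real.abs_sin_le_one ψ) (Real.exp_pos _).le h1
  have hgint : IntervalIntegrable g volume 0 (π/2) := by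
    rw [intervalIntegrable_iff_integrableOn_Ioc_of_le hπ2.le]
    apply Integrable.mono' (integrable_const 1) hgmeas.aestronglyMeasurable.restrict
    filter_upwards [ae_restrict_mem measurableSet_Ioc] with ψ hψ
    exact hgbound ψ ⟨hψ.1.le, hψ.2⟩
  set δ := ∫ ψ in (0:ℝ)..(π/2), g ψ with hδ
  have hδpos : 0 < δ := by
    apply intervalIntegral.intervalIntegral_pos_of_pos_on hgint _ hπ2
    intro ψ hψ
    exact mul_pos (Real.sin_pos_of_pos_of_lt_pi hψ.1 (by linarith [pi_pos, hψ.2])) (Real.exp_pos _)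
  have key : ∀ z : Icc (0:ℝ) L,
      (∫ ξ in (0:ℝ)..L, (1/2) * ∫ ψ in (0:ℝ)..(π/2),
        Real.tan ψ * Real.exp (-|(z:ℝ) - ξ| / Real.cos ψ)) ≤ 1 - δ := by
    rintro ⟨x, hx0, hxL⟩
    simp only
    set μ := volume.restrict (Ioc (0:ℝ) L) with hμ
    set ν := volume.restrict (Ioc (0:ℝ) (π/2)) with hν
    set f : ℝ → ℝ → ℝ := fun ξ ψ => Real.tan ψ * Real.exp (-|x - ξ| / Real.cos ψ) with hf
    have htaneq : Real.tan = fun ψ => Real.sin ψ / Real.cos ψ :=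
      funext fun ψ => Real.tan_eq_sin_div_cos ψ
    have hfm : Measurable (Function.uncurry f) := by
      apply Measurable.mul
      · rw [htaneq]
        exact (Real.measurable_sin.div Real.measurable_cos).comp measurable_snd
      · exact Real.measurable_exp.comp
          ((((measurable_const.sub measurable_fst).abs).neg).div
            (Real.measurable_cos.comp measurable_snd))
    -- the key pointwise bound for the inner integral
    have star : ∀ ψ ∈ Ioc (0:ℝ) (π/2),
        (∫ ξ in Ioc (0:ℝ) L, f ξ ψ) ≤ 2 * Real.sin ψ - 2 * g ψ := by
      intro ψ hψ
      rcases eq_or_lt_of_le hψ.2 with heq | hlt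
      · subst heq
        simp [hf, hg, Real.tan_pi_div_two, Real.cos_pi_div_two, Real.sin_pi_div_two, div_zero]
      · have hc : 0 < Real.cos ψ := Real.cos_pos_of_mem_Ioo ⟨by linarith [hψ.1], hlt⟩
        have htan : 0 ≤ Real.tan ψ :=
          Real.tan_nonneg_of_nonneg_of_le_pi_div_two hψ.1.le hψ.2
        have : (∫ ξ in Ioc (0:ℝ) L, f ξ ψ) = Real.tan ψ * ∫ ξ in (0:ℝ)..L,
            Real.exp (-|x - ξ| / Real.cos ψ) := by
          rw [intervalIntegral.integral_of_le hL.le, ← integral_const_mul]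
        rw [this]
        have hle := inner_integral_le x L (Real.cos ψ) hc hx0 hxL
        have h2 : Real.tan ψ * (Real.cos ψ * (2 - 2 * Real.exp (-L / (2 * Real.cos ψ))))
            = 2 * Real.sin ψ - 2 * g ψ := by
          rw [htaneq, hg]
          field_simp
        calc Real.tan ψ * ∫ ξ in (0:ℝ)..L, Real.exp (-|x - ξ| / Real.cos ψ)
            ≤ Real.tan ψ * (Real.cos ψ * (2 - 2 * Real.exp (-L / (2 * Real.cos ψ)))) :=
              mul_le_mul_of_nonneg_left hle htan
          _ = 2 * Real.sin ψ - 2 * g ψ := h2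
    -- norm of integrand equals integrand on the relevant set
    have hnormeq : ∀ ψ ∈ Ioc (0:ℝ) (π/2),
        (∫ ξ, ‖f ξ ψ‖ ∂μ) = ∫ ξ in Ioc (0:ℝ) L, f ξ ψ := by
      intro ψ hψ
      have htan : 0 ≤ Real.tan ψ :=
        Real.tan_nonneg_of_nonneg_of_le_pi_div_two hψ.1.le hψ.2
      rw [hμ]
      congr 1
      funext ξ
      rw [Real.norm_eq_abs, abs_of_nonneg (mul_nonneg htan (Real.exp_pos _).le)]
    -- integrability on the product
    have hfInt : Integrable (Function.uncurry f) (μ.prod ν) := by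
      refine (integrable_prod_iff' hfm.aestronglyMeasurable).2 ⟨?_, ?_⟩
      · refine Filter.Eventually.of_forall fun ψ => ?_
        have hcont : Continuous fun ξ => f ξ ψ :=
          continuous_const.mul ((((continuous_const.sub continuous_id).abs.neg).div_const
            (Real.cos ψ)).rexp)
        exact hcont.integrableOn_Ioc
      · apply Integrable.mono' (integrable_const 2)
        · exact ((hfm.norm.stronglyMeasurable).integral_prod_left').aestronglyMeasurable.restrict
        · filter_upwards [ae_restrict_mem measurableSet_Ioc] with ψ hψ
          simp only [Function.uncurry_apply_pair]
          have h0 : 0 ≤ ∫ ξ, ‖f ξ ψ‖ ∂μ := integral_nonneg fun ξ => norm_nonneg _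
          rw [Real.norm_eq_abs, abs_of_nonneg h0, hnormeq ψ hψ]
          have h1 := star ψ hψ
          have h2 : Real.sin ψ ≤ 1 := Real.sin_le_one ψ
          have h3 : 0 ≤ g ψ := hgnonneg ψ ⟨hψ.1.le, hψ.2⟩
          linarith
    -- Fubini
    have hswap := MeasureTheory.integral_integral_swap (f := f) (μ := μ) (ν := ν) hfInt
    rw [intervalIntegral.integral_const_mul, intervalIntegral.integral_of_le hL.le]
    have hinner : ∀ ξ : ℝ, (∫ ψ in (0:ℝ)..(π/2), Real.tan ψ * Real.exp (-|x - ξ| / Real.cos ψ))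
        = ∫ ψ, f ξ ψ ∂ν := fun ξ => intervalIntegral.integral_of_le hπ2.le
    simp_rw [hinner]
    rw [show (∫ ξ in Ioc (0:ℝ) L, ∫ ψ, f ξ ψ ∂ν) = ∫ ξ, (∫ ψ, f ξ ψ ∂ν) ∂μ from rfl, hswap]
    -- monotonicity
    have hInt1 : IntegrableOn (fun ψ => ∫ ξ, f ξ ψ ∂μ) (Ioc (0:ℝ) (π/2)) volume :=
      hfInt.integral_prod_right
    have hInt2 : IntegrableOn (fun ψ => 2 * Real.sin ψ - 2 * g ψ) (Ioc (0:ℝ) (π/2)) volume := by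
      apply Integrable.sub
      · exact (continuous_const.mul Real.continuous_sin).integrableOn_Ioc
      · have := hgint.const_mul 2
        rw [intervalIntegrable_iff_integrableOn_Ioc_of_le hπ2.le] at this
        exact this
    have hmono : (∫ ψ, (∫ ξ, f ξ ψ ∂μ) ∂ν) ≤ ∫ ψ in Ioc (0:ℝ) (π/2), (2 * Real.sin ψ - 2 * g ψ) := by
      rw [hν]
      exact setIntegral_mono_on hInt1 hInt2 measurableSet_Ioc star
    have hval : (∫ ψ in Ioc (0:ℝ) (π/2), (2 * Real.sin ψ - 2 * g ψ)) = 2 - 2 * δ := by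
      rw [← intervalIntegral.integral_of_le hπ2.le,
        intervalIntegral.integral_sub ((show Continuous fun ψ => 2 * Real.sin ψ from continuous_const.mul Real.continuous_sin).intervalIntegrable _ _)
          (hgint.const_mul 2),
        intervalIntegral.integral_const_mul, intervalIntegral.integral_const_mul, integral_sin]
      rw [← hδ]
      simp
    rw [hval] at hmono
    linarith
  have hne : Nonempty ↑(Icc (0:ℝ) L) := ⟨⟨0, ⟨le_refl 0, hL.le⟩⟩⟩
  have hsup : (⨆ x : Icc (0:ℝ) L, ∫ ξ in (0:ℝ)..L, K ((x : ℝ) - ξ)) ≤ 1 - δ := by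
    apply ciSup_le
    intro z
    simp only [hK]
    exact key z
  linarith
end
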